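/- Let p be an odd prime, m > 2 odd with gcd(m, p-1) = 1, s even with gcd(m, s) = gcd(m, s-1) = 1, and v = (p^s - 1)/(p-1). Then gcd(1 - v, 2(p^m-1)/(p-1)) = 1, i.e., gcd(v - 1, n) = 1 where n = 2(p^m-1)/(p-1). -/
import Mathlib

open Finset

lemma geom_mul_nat (p : ℕ) (hp : 1 ≤ p) (t : ℕ) :
    (p - 1) * ∑ i ∈ range t, p ^ i = p ^ t - 1 := by
  have key := geom_sum_mul (p : ℤ) t
  have hpt : 1 ≤ p ^ t := Nat.one_le_pow _ _ (by omega)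
  zify [hp, hpt]
  linarith [key]

lemma geom_mod (p q t : ℕ) (hp : 1 ≤ p) (h : q ∣ p - 1) :
    (∑ i ∈ range t, p ^ i) ≡ t [MOD q] := by
  have hpq : p ≡ 1 [MOD q] := ((Nat.modEq_iff_dvd' hp).mpr h).symm
  induction t with
  | zero => simp only [range_zero, sum_empty]; rfl
  | succ n ih =>
    rw [geom_sum_succ]
    calc p * ∑ i ∈ range n, p ^ i + 1 ≡ 1 * n + 1 [MOD q] := (hpq.mul ih).add_right 1
    _ = n + 1 := by ring

theorem stmt_17 (p m s : ℕ) (hp : p.Prime) (hodd : Odd p)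
    (hm : 2 < m) (hmodd : Odd m) (hmp : Nat.gcd m (p - 1) = 1)
    (hs : 2 ≤ s) (hseven : Even s)
    (hms : Nat.gcd m s = 1) (hms1 : Nat.gcd m (s - 1) = 1)
    (v : ℕ) (hv : v = (p ^ s - 1) / (p - 1)) :
    Nat.gcd (v - 1) (2 * (p ^ m - 1) / (p - 1)) = 1 := by
  have hp2 : 2 ≤ p := hp.two_le
  have hp1 : 1 ≤ p := by omega
  have hpos : 0 < p - 1 := by omega
  set G : ℕ → ℕ := fun t => ∑ i ∈ range t, p ^ i with hG
  have Gsucc : ∀ t, G (t + 1) = p * G t + 1 := fun t => geom_sum_succ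
  have hGs : G s = p * G (s - 1) + 1 := by
    have := Gsucc (s - 1)
    rwa [show s - 1 + 1 = s by omega] at this
  have hv' : v = G s := by
    rw [hv, ← geom_mul_nat p hp1 s, Nat.mul_div_cancel_left _ hpos]
  have hv1 : v - 1 = p * G (s - 1) := by omega
  have hn : 2 * (p ^ m - 1) / (p - 1) = 2 * G m := by
    rw [← geom_mul_nat p hp1 m,
      show 2 * ((p - 1) * G m) = (p - 1) * (2 * G m) by ring,
      Nat.mul_div_cancel_left _ hpos]
  rw [hv1, hn]
  have hGm1 : G m = p * G (m - 1) + 1 := by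
    have := Gsucc (m - 1)
    rwa [show m - 1 + 1 = m by omega] at this
  have cp2 : Nat.Coprime p 2 := by
    rw [Nat.coprime_primes hp Nat.prime_two]
    rintro rfl
    exact (by decide : ¬ Odd 2) hodd
  have cpGm : Nat.Coprime p (G m) := by
    rw [hp.coprime_iff_not_dvd]
    intro hdvd
    have h1 : p ∣ 1 := (Nat.dvd_add_right ⟨G (m - 1), rfl⟩).mp (hGm1 ▸ hdvd)
    have := Nat.dvd_one.mp h1
    omega
  have h2p : 2 ∣ p - 1 := by
    obtain ⟨k, hk⟩ := hodd; omega
  have cs2 : Nat.Coprime (G (s - 1)) 2 := by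
    rw [Nat.coprime_comm, Nat.prime_two.coprime_iff_not_dvd]
    intro hdvd
    have hmod := geom_mod p 2 (s - 1) hp1 h2p
    have : (2 : ℕ) ∣ s - 1 := Nat.modEq_zero_iff_dvd.mp
      ((Nat.modEq_zero_iff_dvd.mpr hdvd).symm.trans hmod).symm
    obtain ⟨k, hk⟩ := hseven
    omega
  have key : Nat.Coprime (G (s - 1)) (G m) := by
    set d := Nat.gcd (G (s - 1)) (G m) with hd
    have hds : d ∣ G (s - 1) := Nat.gcd_dvd_left _ _
    have hdm : d ∣ G m := Nat.gcd_dvd_right _ _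
    have h1 : d ∣ p ^ (s - 1) - 1 :=
      hds.trans ⟨p - 1, by rw [← geom_mul_nat p hp1 (s - 1)]; ring⟩
    have h2 : d ∣ p ^ m - 1 :=
      hdm.trans ⟨p - 1, by rw [← geom_mul_nat p hp1 m]; ring⟩
    have e1 : (p : ZMod d) ^ (s - 1) = 1 := by
      have h := ((Nat.modEq_iff_dvd' (Nat.one_le_pow _ _ (by omega))).mpr h1).symm
      have h' := (ZMod.natCast_eq_natCast_iff _ _ _).mpr h
      push_cast at h'; exact h'
    have e2 : (p : ZMod d) ^ m = 1 := by
      have h := ((Nat.modEq_iff_dvd' (Nat.one_le_pow _ _ (by omega))).mpr h2).symm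
      have h' := (ZMod.natCast_eq_natCast_iff _ _ _).mpr h
      push_cast at h'; exact h'
    have hord : orderOf ((p : ZMod d)) ∣ Nat.gcd m (s - 1) :=
      Nat.dvd_gcd (orderOf_dvd_of_pow_eq_one e2) (orderOf_dvd_of_pow_eq_one e1)
    rw [hms1, Nat.dvd_one, orderOf_eq_one_iff] at hord
    have hdp : d ∣ p - 1 := by
      have hcast : (p : ZMod d) = ((1 : ℕ) : ZMod d) := by push_cast; exact hord
      exact (Nat.modEq_iff_dvd' hp1).mp ((ZMod.natCast_eq_natCast_iff _ _ _).mp hcast).symm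
    have hds1 : d ∣ s - 1 := Nat.modEq_zero_iff_dvd.mp
      ((Nat.modEq_zero_iff_dvd.mpr hds).symm.trans (geom_mod p d (s - 1) hp1 hdp)).symm
    have hdm' : d ∣ m := Nat.modEq_zero_iff_dvd.mp
      ((Nat.modEq_zero_iff_dvd.mpr hdm).symm.trans (geom_mod p d m hp1 hdp)).symm
    have : d ∣ 1 := hms1 ▸ Nat.dvd_gcd hdm' hds1
    exact Nat.dvd_one.mp this
  exact Nat.Coprime.mul (cp2.mul_right cpGm) (cs2.mul_right key)
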